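/- For every m : ℕ, setting n = 2^m, there exist p(m) real n×n matrices C_1, …, C_{p(m)} such that each C_k is orthogonal (C_kᵀ C_k = 1), each satisfies C_k² = −1, and any two distinct ones anticommute: C_k C_l = −C_l C_k for k ≠ l. Consequently, for every x on the unit sphere of ℝⁿ the vectors C_1 x, …, C_{p(m)} x form an orthonormal system each member of which is orthogonal to x. -/
import Mathlib


open Matrix
open scoped RealInnerProductSpace

namespace RHaux

/-! ### Combinatorial layer: vectors over `ZMod 2` -/

def pairing {m : ℕ} (s b : Fin m → ZMod 2) : ZMod 2 := ∑ i, s i * b i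

abbrev V (m : ℕ) := (Fin m → ZMod 2) × (Fin m → ZMod 2)

def Good (m p : ℕ) : Prop :=
  ∃ v : Fin p → V m,
    (∀ k, pairing (v k).2 (v k).1 = 1) ∧
    (∀ k l, k ≠ l → pairing (v k).2 (v l).1 + pairing (v l).2 (v k).1 = 1)

lemma pairing_zero_left {m : ℕ} (b : Fin m → ZMod 2) : pairing 0 b = 0 := by
  simp [pairing]

lemma pairing_zero_right {m : ℕ} (s : Fin m → ZMod 2) : pairing s 0 = 0 := by
  simp [pairing]

lemma pairing_add_right {m : ℕ} (s b c : Fin m → ZMod 2) :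
    pairing s (b + c) = pairing s b + pairing s c := by
  simp [pairing, mul_add, Finset.sum_add_distrib]

lemma pairing_add_left {m : ℕ} (s t b : Fin m → ZMod 2) :
    pairing (s + t) b = pairing s b + pairing t b := by
  simp [pairing, add_mul, Finset.sum_add_distrib]

lemma pairing_append {m n : ℕ} (s b : Fin m → ZMod 2) (t u : Fin n → ZMod 2) :
    pairing (Fin.append s t) (Fin.append b u) = pairing s b + pairing t u := by
  unfold pairing
  rw [Fin.sum_univ_add]
  simp [Fin.append_left, Fin.append_right]

/-- The explicit 8-member family on 4 bits. -/
def eF : Fin 8 → V 4 :=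
  ![ (![1,0,0,0], ![1,0,0,0]),
     (![0,1,0,0], ![1,1,0,0]),
     (![1,1,0,0], ![0,1,1,0]),
     (![0,0,1,0], ![1,1,1,0]),
     (![1,0,1,0], ![0,0,1,0]),
     (![0,1,1,0], ![1,0,1,0]),
     (![1,1,1,0], ![0,1,0,1]),
     (![1,1,1,1], ![0,1,0,0]) ]

/-- The auxiliary involution data on 4 bits. -/
def pF : V 4 := (![1,1,1,1], ![0,1,0,1])

lemma eF_diag : ∀ i, pairing (eF i).2 (eF i).1 = 1 := by decide
lemma eF_off : ∀ i j, i ≠ j → pairing (eF i).2 (eF j).1 + pairing (eF j).2 (eF i).1 = 1 := by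
  decide
lemma pF_diag : pairing pF.2 pF.1 = 0 := by decide
lemma pF_eF : ∀ i, pairing pF.2 (eF i).1 + pairing (eF i).2 pF.1 = 1 := by decide

lemma good_step {m p : ℕ} (h : Good m p) : Good (4 + m) (8 + p) := by
  obtain ⟨w, hQ, hB⟩ := h
  refine ⟨Fin.append
    (fun i => (Fin.append (eF i).1 0, Fin.append (eF i).2 0))
    (fun k => (Fin.append pF.1 (w k).1, Fin.append pF.2 (w k).2)), ?_, ?_⟩
  · intro k
    refine Fin.addCases (fun i => ?_) (fun k => ?_) k
    · simp only [Fin.append_left, pairing_append, pairing_zero_left, add_zero]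
      exact eF_diag i
    · simp only [Fin.append_right, pairing_append, pF_diag, hQ k, zero_add]
  · intro k l
    induction k using Fin.addCases with
    | left i =>
      induction l using Fin.addCases with
      | left j =>
        intro hkl
        have hij : i ≠ j := fun h => hkl (by rw [h])
        simp only [Fin.append_left, pairing_append, pairing_zero_left, pairing_zero_right,
          add_zero]
        exact eF_off i j hij
      | right b =>
        intro _
        simp only [Fin.append_left, Fin.append_right, pairing_append, pairing_zero_left,
          pairing_zero_right, add_zero]
        rw [add_comm]
        exact pF_eF i
    | right a =>
      induction l using Fin.addCases with
      | left j =>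
        intro _
        simp only [Fin.append_left, Fin.append_right, pairing_append, pairing_zero_left,
          pairing_zero_right, add_zero]
        exact pF_eF j
      | right b =>
        intro hkl
        have hab : a ≠ b := fun h => hkl (by rw [h])
        simp only [Fin.append_right, pairing_append, pF_diag, zero_add]
        exact hB a b hab


lemma good_zero : Good 0 0 :=
  ⟨Fin.elim0, fun k => k.elim0, fun k => k.elim0⟩

lemma good_one : Good 1 1 := by
  refine ⟨![ (![1], ![1]) ], ?_, ?_⟩ <;> decide

lemma good_two : Good 2 3 := by
  refine ⟨![ (![1,0], ![1,0]), (![0,1], ![1,1]), (![1,1], ![0,1]) ], ?_, ?_⟩ <;> decide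

lemma good_three : Good 3 7 := by
  refine ⟨![ (![1,0,0], ![1,0,0]), (![0,1,0], ![1,1,0]), (![1,1,0], ![0,1,1]),
    (![0,0,1], ![1,1,1]), (![1,0,1], ![0,0,1]), (![0,1,1], ![1,0,1]),
    (![1,1,1], ![0,1,0]) ], ?_, ?_⟩ <;> decide

lemma good_all : ∀ d c : ℕ, c < 4 → Good (4 * d + c) (8 * d + 2 ^ c - 1) := by
  intro d
  induction d with
  | zero =>
    intro c hc
    interval_cases c
    · exact good_zero
    · exact good_one
    · exact good_two
    · exact good_three
  | succ d ih =>
    intro c hc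
    have h1 : 4 * (d + 1) + c = 4 + (4 * d + c) := by omega
    have hp : 1 ≤ 2 ^ c := Nat.one_le_two_pow
    have h2 : 8 * (d + 1) + 2 ^ c - 1 = 8 + (8 * d + 2 ^ c - 1) := by omega
    rw [h1, h2]
    exact good_step (ih c hc)

lemma good_rh (m : ℕ) : Good m (8 * (m / 4) + 2 ^ (m % 4) - 1) := by
  have h := good_all (m / 4) (m % 4) (Nat.mod_lt _ (by norm_num))
  have : 4 * (m / 4) + m % 4 = m := by omega
  rwa [this] at h

/-! ### Matrix layer -/

noncomputable def chi (z : ZMod 2) : ℝ := if z = 1 then -1 else 1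

lemma zmod2_cases : ∀ z : ZMod 2, z = 0 ∨ z = 1 := by decide

lemma chi_zero : chi 0 = 1 := by norm_num [chi]

lemma chi_one : chi 1 = -1 := by norm_num [chi]

lemma chi_add (a b : ZMod 2) : chi (a + b) = chi a * chi b := by
  have h11 : (1 + 1 : ZMod 2) = 0 := by decide
  rcases zmod2_cases a with ha | ha <;> rcases zmod2_cases b with hb | hb <;>
    subst ha <;> subst hb <;>
    simp only [h11, add_zero, zero_add, chi_zero, chi_one] <;> norm_num

lemma chi_eq_neg_chi {a b : ZMod 2} (h : a + b = 1) : chi a = -chi b := by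
  rcases zmod2_cases a with ha | ha <;> rcases zmod2_cases b with hb | hb <;>
    subst ha <;> subst hb <;> first
      | (exfalso; revert h; decide)
      | norm_num [chi]

lemma chi_mul_self (a : ZMod 2) : chi a * chi a = 1 := by
  rcases zmod2_cases a with ha | ha <;> subst ha <;> norm_num [chi]

variable {m : ℕ}

lemma vadd_self (a : Fin m → ZMod 2) : a + a = 0 := by
  funext i
  have : ∀ u : ZMod 2, u + u = 0 := by decide
  exact this _

lemma vadd_cancel (x a : Fin m → ZMod 2) : x + a + a = x := by
  rw [add_assoc, vadd_self, add_zero]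

/-- The signed-permutation matrix attached to a pair of bit vectors. -/
noncomputable def gmat (v : V m) : Matrix (Fin m → ZMod 2) (Fin m → ZMod 2) ℝ :=
  Matrix.of fun x y => if x = y + v.1 then chi (pairing v.2 y) else 0

lemma gmat_mul (v w : V m) :
    gmat v * gmat w = chi (pairing v.2 w.1) • gmat (v.1 + w.1, v.2 + w.2) := by
  ext x y
  simp only [Matrix.mul_apply, gmat, Matrix.of_apply, Matrix.smul_apply, smul_eq_mul]
  rw [Finset.sum_eq_single (y + w.1)]
  · simp only [if_pos rfl, if_true]
    have harg : y + w.1 + v.1 = y + (v.1 + w.1) := by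
      rw [add_assoc, add_comm w.1 v.1]
    rw [harg]
    by_cases h : x = y + (v.1 + w.1)
    · rw [if_pos h, if_pos h, pairing_add_right, pairing_add_left, chi_add, chi_add]
      ring
    · rw [if_neg h, if_neg h, zero_mul, mul_zero]
  · intro z _ hz
    rw [if_neg hz, mul_zero]
  · intro h
    exact absurd (Finset.mem_univ _) h

lemma gmat_transpose (v : V m) :
    (gmat v)ᵀ = chi (pairing v.2 v.1) • gmat v := by
  ext x y
  simp only [Matrix.transpose_apply, gmat, Matrix.of_apply, Matrix.smul_apply, smul_eq_mul]
  by_cases h : x = y + v.1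
  · have h' : y = x + v.1 := by rw [h, vadd_cancel]
    rw [if_pos h', if_pos h, h, pairing_add_right, chi_add]
    ring
  · have h' : y ≠ x + v.1 := by
      intro hy
      exact h (by rw [hy, vadd_cancel])
    rw [if_neg h', if_neg h, mul_zero]

lemma gmat_zero : gmat ((0, 0) : V m) = 1 := by
  ext x y
  simp [gmat, Matrix.one_apply, pairing_zero_left, chi_zero, eq_comm]

lemma gmat_sq (v : V m) : gmat v * gmat v = chi (pairing v.2 v.1) • 1 := by
  rw [gmat_mul, vadd_self, vadd_self, gmat_zero]

lemma gmat_orth (v : V m) : (gmat v)ᵀ * gmat v = 1 := by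
  rw [gmat_transpose, Matrix.smul_mul, gmat_sq, smul_smul, chi_mul_self, one_smul]

lemma gmat_neg_one (v : V m) (h : pairing v.2 v.1 = 1) : gmat v * gmat v = -1 := by
  rw [gmat_sq, h, chi_one, neg_smul, one_smul]

lemma gmat_anticomm (v w : V m) (h : pairing v.2 w.1 + pairing w.2 v.1 = 1) :
    gmat v * gmat w = -(gmat w * gmat v) := by
  rw [gmat_mul, gmat_mul, add_comm w.1 v.1, add_comm w.2 v.2,
    chi_eq_neg_chi h, neg_smul]

/-! ### Euclidean layer -/

lemma toEuclideanLin_mul' {n : ℕ} (A B : Matrix (Fin n) (Fin n) ℝ)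
    (x : EuclideanSpace ℝ (Fin n)) :
    Matrix.toEuclideanLin (A * B) x = Matrix.toEuclideanLin A (Matrix.toEuclideanLin B x) := by
  rw [Matrix.toEuclideanLin_eq_toLin, Matrix.toLin_mul _ (PiLp.basisFun 2 ℝ (Fin n))]
  rfl

lemma toEuclideanLin_one' {n : ℕ} (x : EuclideanSpace ℝ (Fin n)) :
    Matrix.toEuclideanLin (1 : Matrix (Fin n) (Fin n) ℝ) x = x := by
  rw [Matrix.toEuclideanLin_eq_toLin, Matrix.toLin_one]
  rfl

lemma inner_toEuclideanLin {n : ℕ} (A : Matrix (Fin n) (Fin n) ℝ)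
    (x y : EuclideanSpace ℝ (Fin n)) :
    ⟪Matrix.toEuclideanLin A x, y⟫ = ⟪x, Matrix.toEuclideanLin Aᵀ y⟫ := by
  have h : Aᵀ = Aᴴ := by
    ext i j
    simp [Matrix.conjTranspose_apply]
  rw [h, Matrix.toEuclideanLin_conjTranspose_eq_adjoint, LinearMap.adjoint_inner_right]

lemma skew_inner {n : ℕ} (M : Matrix (Fin n) (Fin n) ℝ) (h : Mᵀ = -M)
    (x : EuclideanSpace ℝ (Fin n)) : ⟪Matrix.toEuclideanLin M x, x⟫ = 0 := by
  have h1 := inner_toEuclideanLin M x x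
  rw [h] at h1
  have h2 : Matrix.toEuclideanLin (-M) x = -(Matrix.toEuclideanLin M x) := by
    rw [map_neg, LinearMap.neg_apply]
  rw [h2, inner_neg_right] at h1
  have h3 := real_inner_comm x (Matrix.toEuclideanLin M x)
  linarith

lemma euclidean_part {n q : ℕ} (C : Fin q → Matrix (Fin n) (Fin n) ℝ)
    (h1 : ∀ k, (C k)ᵀ * C k = 1) (h2 : ∀ k, C k * C k = -1)
    (h3 : ∀ k l, k ≠ l → C k * C l = -(C l * C k))
    (x : EuclideanSpace ℝ (Fin n)) (hx : ‖x‖ = 1) :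
    (∀ k, ⟪Matrix.toEuclideanLin (C k) x, x⟫ = 0) ∧
    (∀ k, ‖Matrix.toEuclideanLin (C k) x‖ = 1) ∧
    (∀ k l, k ≠ l →
      ⟪Matrix.toEuclideanLin (C k) x, Matrix.toEuclideanLin (C l) x⟫ = 0) := by
  have hskew : ∀ k, (C k)ᵀ = -(C k) := by
    intro k
    have h := congrArg (fun M => (C k)ᵀ * M) (h2 k)
    simp only [← mul_assoc, h1 k, one_mul, Matrix.mul_neg, Matrix.mul_one] at h
    exact (neg_eq_iff_eq_neg.mpr h).symm
  refine ⟨?_, ?_, ?_⟩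
  · intro k
    exact skew_inner _ (hskew k) x
  · intro k
    have hi : ⟪Matrix.toEuclideanLin (C k) x, Matrix.toEuclideanLin (C k) x⟫ = 1 := by
      rw [inner_toEuclideanLin, ← toEuclideanLin_mul', h1 k, toEuclideanLin_one',
        real_inner_self_eq_norm_mul_norm, hx, one_mul]
    have hn := real_inner_self_eq_norm_mul_norm (Matrix.toEuclideanLin (C k) x)
    nlinarith [norm_nonneg (Matrix.toEuclideanLin (C k) x)]
  · intro k l hkl
    have hM : ((C k)ᵀ * C l)ᵀ = -((C k)ᵀ * C l) := by
      rw [Matrix.transpose_mul, Matrix.transpose_transpose, hskew k, hskew l,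
        Matrix.neg_mul, Matrix.neg_mul, neg_neg, h3 k l hkl]
    rw [inner_toEuclideanLin, ← toEuclideanLin_mul', real_inner_comm]
    exact skew_inner _ hM x

end RHaux



/-- The Radon–Hurwitz number `p m = 8 * d + 2 ^ c - 1`, where `m = 4 * d + c` and `c = m % 4`. -/
def radonHurwitz (m : ℕ) : ℕ := 8 * (m / 4) + 2 ^ (m % 4) - 1

theorem exists_radonHurwitz_system (m : ℕ) :
    ∃ C : Fin (radonHurwitz m) → Matrix (Fin (2 ^ m)) (Fin (2 ^ m)) ℝ,
      (∀ k, (C k)ᵀ * C k = 1) ∧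
      (∀ k, C k * C k = -1) ∧
      (∀ k l, k ≠ l → C k * C l = -(C l * C k)) ∧
      (∀ x : EuclideanSpace ℝ (Fin (2 ^ m)), ‖x‖ = 1 →
        (∀ k, ⟪Matrix.toEuclideanLin (C k) x, x⟫ = 0) ∧
        (∀ k, ‖Matrix.toEuclideanLin (C k) x‖ = 1) ∧
        (∀ k l, k ≠ l →
          ⟪Matrix.toEuclideanLin (C k) x, Matrix.toEuclideanLin (C l) x⟫ = 0)) := by
  obtain ⟨v, hQ, hB⟩ := RHaux.good_rh m
  let e : (Fin m → ZMod 2) ≃ Fin (2 ^ m) := Fintype.equivFinOfCardEq (by simp)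
  let φ := Matrix.reindexAlgEquiv ℝ ℝ e
  have hT : ∀ A : Matrix (Fin m → ZMod 2) (Fin m → ZMod 2) ℝ, (φ A)ᵀ = φ Aᵀ := by
    intro A
    simp only [φ, Matrix.reindexAlgEquiv_apply, Matrix.transpose_reindex]
  have hv : radonHurwitz m = 8 * (m / 4) + 2 ^ (m % 4) - 1 := rfl
  refine ⟨fun k => φ (RHaux.gmat (v (Fin.cast hv k))), ?_, ?_, ?_, ?_⟩
  · intro k
    rw [hT, ← _root_.map_mul, RHaux.gmat_orth, _root_.map_one]
  · intro k
    rw [← _root_.map_mul, RHaux.gmat_neg_one _ (hQ _), map_neg, _root_.map_one]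
  · intro k l hkl
    have h : Fin.cast hv k ≠ Fin.cast hv l := by
      intro h
      exact hkl (by simpa using congrArg (Fin.cast hv.symm) h)
    rw [← _root_.map_mul, ← _root_.map_mul, RHaux.gmat_anticomm _ _ (hB _ _ h), map_neg]
  · intro x hx
    refine RHaux.euclidean_part _ ?_ ?_ ?_ x hx
    · intro k
      rw [hT, ← _root_.map_mul, RHaux.gmat_orth, _root_.map_one]
    · intro k
      rw [← _root_.map_mul, RHaux.gmat_neg_one _ (hQ _), map_neg, _root_.map_one]
    · intro k l hkl
      have h : Fin.cast hv k ≠ Fin.cast hv l := by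
        intro h
        exact hkl (by simpa using congrArg (Fin.cast hv.symm) h)
      rw [← _root_.map_mul, ← _root_.map_mul, RHaux.gmat_anticomm _ _ (hB _ _ h), map_neg]
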